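/- Let X be a Hausdorff topological space and suppose there exists a sequence of continuous functions f_n : X → [0,1] with f_0 ≥ f_1 ≥ f_2 ≥ ⋯ pointwise, converging pointwise to 0 on X, such that every closed set A ⊆ X on which the sequence (f_n) converges uniformly is compact. Then there exist a Polish space Y and a perfect surjection p : X → Y, i.e., a continuous closed map of X onto Y such that p⁻¹(K) is compact for every compact K ⊆ Y. (Indeed, the diagonal map F = (f_0, f_1, …) : X → [0,1]^ℕ is perfect onto its image F(X), which is a G_δ subset of [0,1]^ℕ.) -/

import Mathlib

open Cardinal Filter Topology Metric

/-- Core lemma: if `C` is closed, `y` is in the closure of the image of `C` under the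
diagonal map, and `y` tends to `0`, then `y` is in the image of `C`. -/
lemma stmt17_core {X : Type} [TopologicalSpace X]
    (f : ℕ → X → ℝ)
    (hfc : ∀ n, Continuous (f n))
    (hfI : ∀ n x, f n x ∈ Set.Icc (0 : ℝ) 1)
    (hfdec : ∀ n x, f (n + 1) x ≤ f n x)
    (hfto0 : ∀ x, Tendsto (fun n => f n x) atTop (nhds 0))
    (hfcomp : ∀ A : Set X, IsClosed A → TendstoUniformlyOn f (fun _ => 0) atTop A →
      IsCompact A)
    (C : Set X) (hC : IsClosed C) (y : ℕ → ℝ)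
    (hycl : y ∈ closure ((fun x n => f n x) '' C))
    (hy0 : Tendsto y atTop (nhds 0)) :
    ∃ x ∈ C, (fun n => f n x) = y := by
  have hanti : ∀ w : X, Antitone fun m => f m w :=
    fun w => antitone_nat_of_succ_le fun m => hfdec m w
  have hhalf : ∀ j : ℕ, (0:ℝ) < (1/2)^j := fun j => pow_pos (by norm_num) j
  -- choose φ j such that |y m| < (1/2)^j for m ≥ φ j
  have h1 : ∀ j : ℕ, ∃ N, ∀ m ≥ N, |y m| < (1/2)^j := by
    intro j
    obtain ⟨N, hN⟩ := Metric.tendsto_atTop.mp hy0 ((1/2)^j) (hhalf j)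
    exact ⟨N, fun m hm => by simpa [Real.dist_eq] using hN m hm⟩
  choose φ hφ using h1
  set n : ℕ → ℕ := fun j => j + (Finset.range (j+1)).sup φ with hn
  have hnmono : Monotone n := by
    intro a b hab
    exact add_le_add hab (Finset.sup_mono (Finset.range_subset_range.mpr (by omega)))
  have hnj : ∀ j, j ≤ n j := fun j => Nat.le_add_right _ _
  have hyn : ∀ j, |y (n j)| < (1/2)^j := by
    intro j
    refine hφ j (n j) ?_
    calc φ j ≤ (Finset.range (j+1)).sup φ := Finset.le_sup (Finset.self_mem_range_succ j)
    _ ≤ n j := Nat.le_add_left _ _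
  -- witnesses
  have hwit : ∀ j : ℕ, ∃ x ∈ C, ∀ k ≤ n j, |f k x - y k| ≤ (1/2)^j := by
    intro j
    have hV : {z : ℕ → ℝ | ∀ k ∈ Finset.range (n j + 1), |z k - y k| < (1/2)^j} ∈ nhds y := by
      rw [show {z : ℕ → ℝ | ∀ k ∈ Finset.range (n j + 1), |z k - y k| < (1/2)^j}
          = ⋂ k ∈ Finset.range (n j + 1), {z : ℕ → ℝ | |z k - y k| < (1/2)^j} by
        ext z; simp]
      refine (Filter.biInter_finset_mem _).mpr fun k _ => ?_
      have hopen : IsOpen {z : ℕ → ℝ | |z k - y k| < (1/2)^j} := by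
        have : {z : ℕ → ℝ | |z k - y k| < (1/2)^j}
            = (fun z : ℕ → ℝ => z k) ⁻¹' Metric.ball (y k) ((1/2)^j) := by
          ext z; simp [Metric.mem_ball, Real.dist_eq]
        rw [this]
        exact (continuous_apply k).isOpen_preimage _ Metric.isOpen_ball
      exact hopen.mem_nhds (by simp [hhalf j])
    obtain ⟨z, hz1, hz2⟩ := mem_closure_iff_nhds.mp hycl _ hV
    obtain ⟨x, hxC, rfl⟩ := hz2
    exact ⟨x, hxC, fun k hk => (hz1 k (Finset.mem_range_succ_iff.mpr hk)).le⟩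
  choose x hxC hx using hwit
  -- key uniform bound on the witnesses
  have key : ∀ ε > (0:ℝ), ∃ N, ∀ m ≥ N, ∀ j, f m (x j) ≤ ε/2 := by
    intro ε hε
    obtain ⟨J, hJ⟩ := exists_pow_lt_of_lt_one (show (0:ℝ) < ε/8 by linarith)
      (show (1/2:ℝ) < 1 by norm_num)
    obtain ⟨N1, hN1⟩ := Metric.tendsto_atTop.mp hy0 (ε/8) (by linarith)
    have hMj : ∀ j, ∃ M, ∀ m ≥ M, f m (x j) ≤ ε/2 := by
      intro j
      obtain ⟨M, hM⟩ := Metric.tendsto_atTop.mp (hfto0 (x j)) (ε/2) (by linarith)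
      refine ⟨M, fun m hm => ?_⟩
      have h1 := hM m hm
      rw [Real.dist_eq, sub_zero, abs_of_nonneg (hfI m (x j)).1] at h1
      linarith
    choose M hM using hMj
    refine ⟨max N1 ((Finset.range (J+1)).sup M), fun m hm j => ?_⟩
    have hmN1 : N1 ≤ m := le_trans (le_max_left _ _) hm
    by_cases hjJ : j ≤ J
    · exact hM j m (le_trans (le_trans (Finset.le_sup (Finset.mem_range_succ_iff.mpr hjJ))
        (le_max_right _ _)) hm)
    · push_neg at hjJ
      have hjhalf : (1/2:ℝ)^j ≤ (1/2)^J :=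
        pow_le_pow_of_le_one (by norm_num) (by norm_num) hjJ.le
      by_cases hmn : n j ≤ m
      · have h1 : f m (x j) ≤ f (n j) (x j) := hanti (x j) hmn
        have h2 := abs_le.mp (hx j (n j) le_rfl)
        have h3 := (abs_le.mp (hyn j).le).2
        linarith
      · push_neg at hmn
        have h2 := abs_le.mp (hx j m hmn.le)
        have h3 : |y m| < ε/8 := by
          simpa [Real.dist_eq] using hN1 m hmN1
        have h4 := (abs_le.mp h3.le).2
        linarith
  set A := closure (Set.range x) with hA
  have hAC : A ⊆ C := closure_minimal (Set.range_subset_iff.mpr hxC) hC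
  have hunif : TendstoUniformlyOn f (fun _ => 0) atTop A := by
    rw [Metric.tendstoUniformlyOn_iff]
    intro ε hε
    obtain ⟨N, hN⟩ := key ε hε
    refine Filter.eventually_atTop.mpr ⟨N, fun m hm w hw => ?_⟩
    have hcl : A ⊆ {w | f m w ≤ ε/2} :=
      closure_minimal (Set.range_subset_iff.mpr fun j => hN m hm j)
        (isClosed_le (hfc m) continuous_const)
    have h1 := hcl hw
    have h0 := (hfI m w).1
    simp only [Set.mem_setOf_eq] at h1
    rw [Real.dist_eq, abs_sub_comm, sub_zero, abs_of_nonneg h0]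
    linarith
  have hAcomp : IsCompact A := hfcomp A isClosed_closure hunif
  -- the decreasing sequence of closed sets
  set D : ℕ → Set X := fun j => A ∩ ⋂ k, {w | k ≤ n j → |f k w - y k| ≤ (1/2)^j} with hD
  have hDclosed : ∀ j, IsClosed (D j) := by
    intro j
    refine isClosed_closure.inter (isClosed_iInter fun k => ?_)
    by_cases hk : k ≤ n j
    · have : {w : X | k ≤ n j → |f k w - y k| ≤ (1/2)^j}
          = {w | |f k w - y k| ≤ (1/2)^j} := by ext w; simp [hk]
      rw [this]
      exact isClosed_le ((hfc k).sub continuous_const).abs continuous_const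
    · have : {w : X | k ≤ n j → |f k w - y k| ≤ (1/2)^j} = Set.univ := by
        ext w; simp [hk]
      rw [this]; exact isClosed_univ
  have hDsub : ∀ j, D (j+1) ⊆ D j := by
    intro j w hw
    refine ⟨hw.1, Set.mem_iInter.mpr fun k => ?_⟩
    intro hk
    have h1 := Set.mem_iInter.mp hw.2 k (le_trans hk (hnmono (Nat.le_succ j)))
    calc |f k w - y k| ≤ (1/2)^(j+1) := h1
    _ ≤ (1/2)^j := pow_le_pow_of_le_one (by norm_num) (by norm_num) (Nat.le_succ j)
  have hDne : ∀ j, (D j).Nonempty := by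
    intro j
    refine ⟨x j, subset_closure (Set.mem_range_self j), Set.mem_iInter.mpr fun k hk => ?_⟩
    exact hx j k hk
  obtain ⟨w, hw⟩ := IsCompact.nonempty_iInter_of_sequence_nonempty_isCompact_isClosed D
    hDsub hDne (hAcomp.of_isClosed_subset (hDclosed 0) Set.inter_subset_left) hDclosed
  simp only [Set.mem_iInter] at hw
  refine ⟨w, hAC (hw 0).1, funext fun k => ?_⟩
  have hb : ∀ᶠ j in atTop, |f k w - y k| ≤ (1/2)^j := by
    refine Filter.eventually_atTop.mpr ⟨k, fun j hj => ?_⟩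
    exact Set.mem_iInter.mp (hw j).2 k (le_trans hj (hnj j))
  have h0 : |f k w - y k| ≤ 0 :=
    ge_of_tendsto (tendsto_pow_atTop_nhds_zero_of_lt_one (by norm_num) (by norm_num)) hb
  have h1 : f k w - y k = 0 := abs_eq_zero.mp (le_antisymm h0 (abs_nonneg _))
  linarith
/-- If a Hausdorff space `X` carries a pointwise decreasing sequence of continuous
functions `fₙ : X → [0,1]` converging pointwise to `0` such that every closed set on which
the convergence is uniform is compact, then there exist a Polish space `Y` and a perfect
surjection `p : X → Y`. -/
theorem stmt_17 (X : Type) [TopologicalSpace X] [T2Space X]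
    (f : ℕ → X → ℝ)
    (hfc : ∀ n, Continuous (f n))
    (hfI : ∀ n x, f n x ∈ Set.Icc (0 : ℝ) 1)
    (hfdec : ∀ n x, f (n + 1) x ≤ f n x)
    (hfto0 : ∀ x, Tendsto (fun n => f n x) atTop (nhds 0))
    (hfcomp : ∀ A : Set X, IsClosed A → TendstoUniformlyOn f (fun _ => 0) atTop A →
      IsCompact A) :
    ∃ (Y : Type) (tY : TopologicalSpace Y) (p : X → Y),
      @PolishSpace Y tY ∧ Function.Surjective p ∧ @Continuous _ _ _ tY p ∧
      @IsClosedMap _ _ _ tY p ∧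
      ∀ K : Set Y, @IsCompact _ tY K → IsCompact (p ⁻¹' K) := by
  classical
  set F : X → ℕ → ℝ := fun x n => f n x with hF
  have hFc : Continuous F := continuous_pi fun m => hfc m
  have hanti : ∀ x : X, Antitone fun m => f m x :=
    fun x => antitone_nat_of_succ_le fun m => hfdec m x
  set s : Set (ℕ → ℝ) := Set.range F with hs
  set C : Set (ℕ → ℝ) := closure s with hCdef
  set U : ℕ → Set (ℕ → ℝ) := fun k => ⋃ m, {z | z m < 1/(k+1)} with hU
  have hUopen : ∀ k, IsOpen (U k) := by
    intro k
    exact isOpen_iUnion fun m => isOpen_lt (continuous_apply m) continuous_const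
  have hksucc : ∀ k : ℕ, (0:ℝ) < 1/(k+1) := by
    intro k; positivity
  have hsU : ∀ k, s ⊆ U k := by
    rintro k _ ⟨x, rfl⟩
    obtain ⟨N, hN⟩ := Metric.tendsto_atTop.mp (hfto0 x) (1/(k+1)) (hksucc k)
    refine Set.mem_iUnion.mpr ⟨N, ?_⟩
    have := hN N le_rfl
    rw [Real.dist_eq, sub_zero, abs_of_nonneg (hfI N x).1] at this
    exact this
  -- membership criterion for the range
  have hmem : ∀ z : ℕ → ℝ, z ∈ C → (∀ k, z ∈ U k) → z ∈ s := by
    intro z hzC hzU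
    -- z is antitone and nonneg
    have hsub : C ⊆ {z : ℕ → ℝ | ∀ m, z (m+1) ≤ z m ∧ 0 ≤ z m} := by
      refine closure_minimal ?_ ?_
      · rintro _ ⟨x, rfl⟩ m
        exact ⟨hfdec m x, (hfI m x).1⟩
      · have : {z : ℕ → ℝ | ∀ m, z (m+1) ≤ z m ∧ 0 ≤ z m}
            = ⋂ m, ({z : ℕ → ℝ | z (m+1) ≤ z m} ∩ {z | 0 ≤ z m}) := by
          ext w; simp [Set.mem_iInter, forall_and]
        rw [this]
        exact isClosed_iInter fun m =>
          (isClosed_le (continuous_apply (m+1)) (continuous_apply m)).inter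
            (isClosed_le continuous_const (continuous_apply m))
    have hzmono : ∀ m, z (m+1) ≤ z m := fun m => (hsub hzC m).1
    have hznn : ∀ m, 0 ≤ z m := fun m => (hsub hzC m).2
    have hzanti : Antitone z := antitone_nat_of_succ_le hzmono
    have hz0 : Tendsto z atTop (nhds 0) := by
      rw [Metric.tendsto_atTop]
      intro ε hε
      obtain ⟨k, hk⟩ := exists_nat_one_div_lt hε
      obtain ⟨m, hm⟩ := Set.mem_iUnion.mp (hzU k)
      refine ⟨m, fun m' hm' => ?_⟩
      rw [Real.dist_eq, sub_zero, abs_of_nonneg (hznn m')]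
      calc z m' ≤ z m := hzanti hm'
      _ < 1/(k+1) := hm
      _ < ε := hk
    obtain ⟨x, -, hx⟩ := stmt17_core f hfc hfI hfdec hfto0 hfcomp Set.univ isClosed_univ z
      (by simpa [Set.image_univ] using hzC) hz0
    exact ⟨x, hx⟩
  -- Polishness of the range via a closed embedding
  letI := TopologicalSpace.upgradeIsCompletelyMetrizable (ℕ → ℝ)
  have hUcne : ∀ k, ((U k)ᶜ).Nonempty := by
    intro k
    refine ⟨fun _ => 1, ?_⟩
    intro h
    obtain ⟨m, hm⟩ := Set.mem_iUnion.mp h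
    simp only [Set.mem_setOf_eq] at hm
    have : (1:ℝ)/(k+1) ≤ 1 := by
      rw [div_le_one (by positivity)]
      simp
    linarith
  have hdpos : ∀ (k) (z : ℕ → ℝ), z ∈ U k → 0 < Metric.infDist z (U k)ᶜ := by
    intro k z hz
    rcases eq_or_lt_of_le (Metric.infDist_nonneg (s := (U k)ᶜ) (x := z)) with h | h
    · exfalso
      have : z ∈ (U k)ᶜ :=
        ((isClosed_compl_iff.mpr (hUopen k)).mem_iff_infDist_zero (hUcne k)).mpr h.symm
      exact this hz
    · exact h
  have hpolish : PolishSpace ↥s := by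
    set g : (ℕ → ℝ) → ℕ → ℝ := fun z k => (Metric.infDist z (U k)ᶜ)⁻¹ with hg
    set φ : ↥s → (ℕ → ℝ) × (ℕ → ℝ) := fun y => (y.val, g y.val) with hφ
    have hφcont : Continuous φ := by
      refine continuous_subtype_val.prodMk (continuous_pi fun k => ?_)
      rw [continuous_iff_continuousAt]
      intro y
      refine ContinuousAt.inv₀ ?_ ?_
      · exact ((Metric.continuous_infDist_pt _).comp continuous_subtype_val).continuousAt
      · exact ne_of_gt (hdpos k y.val (hsU k y.2))
    have hrange : Set.range φ
        = {p : (ℕ → ℝ) × (ℕ → ℝ) | p.1 ∈ C ∧ ∀ k, Metric.infDist p.1 (U k)ᶜ * p.2 k = 1} := by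
      ext p
      constructor
      · rintro ⟨y, rfl⟩
        refine ⟨subset_closure y.2, fun k => ?_⟩
        exact mul_inv_cancel₀ (ne_of_gt (hdpos k y.val (hsU k y.2)))
      · rintro ⟨h1, h2⟩
        have hUk : ∀ k, p.1 ∈ U k := by
          intro k
          by_contra hk
          have : p.1 ∈ (U k)ᶜ := hk
          have h0 : Metric.infDist p.1 (U k)ᶜ = 0 := Metric.infDist_zero_of_mem this
          have h2' := h2 k
          rw [h0, zero_mul] at h2'
          exact one_ne_zero h2'.symm
        have hps : p.1 ∈ s := hmem p.1 h1 hUk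
        refine ⟨⟨p.1, hps⟩, ?_⟩
        have : g p.1 = p.2 := by
          funext k
          have hd := ne_of_gt (hdpos k p.1 (hUk k))
          show (Metric.infDist p.1 (U k)ᶜ)⁻¹ = p.2 k
          exact (eq_inv_of_mul_eq_one_right (h2 k)).symm
        rw [hφ]
        simp only [this]
    have hclosed : IsClosed (Set.range φ) := by
      rw [hrange]
      have : {p : (ℕ → ℝ) × (ℕ → ℝ) | p.1 ∈ C ∧ ∀ k, Metric.infDist p.1 (U k)ᶜ * p.2 k = 1}
          = (Prod.fst ⁻¹' C) ∩ ⋂ k, {p : (ℕ → ℝ) × (ℕ → ℝ) |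
              Metric.infDist p.1 (U k)ᶜ * p.2 k = 1} := by
        ext q; simp [Set.mem_iInter]
      rw [this]
      refine (isClosed_closure.preimage continuous_fst).inter (isClosed_iInter fun k => ?_)
      exact isClosed_eq (((Metric.continuous_infDist_pt _).comp continuous_fst).mul
        ((continuous_apply k).comp continuous_snd)) continuous_const
    have hemb : Topology.IsEmbedding φ := by
      refine ⟨Topology.IsInducing.of_comp hφcont continuous_fst ?_, ?_⟩
      · exact Topology.IsInducing.subtypeVal
      · intro a b hab
        exact Subtype.ext (congrArg Prod.fst hab)
    exact (Topology.IsClosedEmbedding.mk hemb hclosed).polishSpace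
  -- the perfect surjection
  refine ⟨↥s, inferInstance, Set.rangeFactorization F, hpolish, Set.rangeFactorization_surjective, ?_, ?_, ?_⟩
  · exact hFc.subtype_mk _
  · -- closed map
    intro Cl hCl
    have himg : Set.rangeFactorization F '' Cl = Subtype.val ⁻¹' closure (F '' Cl) := by
      ext z
      constructor
      · rintro ⟨x, hx, rfl⟩
        exact subset_closure ⟨x, hx, rfl⟩
      · intro hz
        obtain ⟨x₀, hx₀⟩ := z.2
        have hz0 : Tendsto (fun m => z.val m) atTop (nhds 0) := by
          rw [← hx₀]
          exact hfto0 x₀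
        obtain ⟨x, hxC, hx⟩ := stmt17_core f hfc hfI hfdec hfto0 hfcomp Cl hCl z.val hz hz0
        exact ⟨x, hxC, Subtype.ext hx⟩
    rw [himg]
    exact isClosed_closure.preimage continuous_subtype_val
  · -- compact preimages
    intro K hK
    have hK' : IsCompact (Subtype.val '' K) := hK.image continuous_subtype_val
    have hpre : Set.rangeFactorization F ⁻¹' K = F ⁻¹' (Subtype.val '' K) := by
      ext x
      simp only [Set.mem_preimage]
      constructor
      · intro h
        exact ⟨Set.rangeFactorization F x, h, rfl⟩
      · rintro ⟨w, hwK, hw⟩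
        have : w = Set.rangeFactorization F x := Subtype.ext hw
        rwa [this] at hwK
    rw [hpre]
    refine hfcomp _ (hK'.isClosed.preimage hFc) ?_
    rw [Metric.tendstoUniformlyOn_iff]
    intro ε hε
    -- finite subcover
    have hcover : Subtype.val '' K ⊆ ⋃ m : ℕ, {z : ℕ → ℝ | z m < ε/2} := by
      rintro _ ⟨w, hwK, rfl⟩
      obtain ⟨x₀, hx₀⟩ := w.2
      obtain ⟨N, hN⟩ := Metric.tendsto_atTop.mp (hfto0 x₀) (ε/2) (by linarith)
      refine Set.mem_iUnion.mpr ⟨N, ?_⟩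
      have := hN N le_rfl
      rw [Real.dist_eq, sub_zero, abs_of_nonneg (hfI N x₀).1] at this
      show w.val N < ε/2
      rw [← hx₀]
      exact this
    obtain ⟨T, hT⟩ := hK'.elim_finite_subcover (fun m : ℕ => {z : ℕ → ℝ | z m < ε/2})
      (fun m => isOpen_lt (continuous_apply m) continuous_const) hcover
    refine Filter.eventually_atTop.mpr ⟨T.sup id, fun m hm x hx => ?_⟩
    have hFx : F x ∈ Subtype.val '' K := hx
    obtain ⟨i, hiT, hi⟩ := Set.mem_iUnion₂.mp (hT hFx)
    have him : i ≤ m := le_trans (Finset.le_sup (f := id) hiT) hm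
    have h1 : f m x ≤ f i x := hanti x him
    have h2 : f i x < ε/2 := hi
    rw [Real.dist_eq, zero_sub, abs_neg, abs_of_nonneg (hfI m x).1]
    linarith
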